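/- DT-recognizable ℒ-fuzzy tree languages are closed under inverse context translations and context translations: if Φ is DT-recognizable and p is a ΣX-context, then both p^{-1}(Φ), defined by p^{-1}(Φ)(t) = Φ(p(t)), and p(Φ), defined by p(Φ)(t) = Φ(s) if t = p(s) for some tree s and 0 otherwise, are DT-recognizable. -/

import Mathlib

/-- Trees over a ranked alphabet `σ` (with arity map `ar`) and leaf alphabet `X`. -/
inductive FTree (σ : Type) (ar : σ → ℕ) (X : Type) : Type where
  | leaf : X → FTree σ ar X
  | node : (f : σ) → (Fin (ar f) → FTree σ ar X) → FTree σ ar X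

/-- The path alphabet Γ: pairs (f, i) with i < arity of f. -/
abbrev PathSym (σ : Type) (ar : σ → ℕ) : Type := (f : σ) × Fin (ar f)

variable {σ X : Type} {ar : σ → ℕ}

/-- The set of paths of a tree: words over Γ ending in a leaf symbol. -/
def FTree.paths : FTree σ ar X → Set (List (PathSym σ ar) × X)
  | .leaf x => {([], x)}
  | .node f ts => {p | ∃ (i : Fin (ar f)) (w : List (PathSym σ ar)) (x : X),
      p = (⟨f, i⟩ :: w, x) ∧ (w, x) ∈ (ts i).paths}

variable {A : Type}

/-- Action of a path word in a DT algebra. -/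
def dtState (op : (f : σ) → A → Fin (ar f) → A) : List (PathSym σ ar) → A → A
  | [], a => a
  | ⟨f, i⟩ :: w, a => dtState op w (op f a i)

/-- The fuzzy tree language computed by an L-DT recognizer from state `a`. -/
def phi {L : Type} [SemilatticeInf L] [OrderTop L]
    (op : (f : σ) → A → Fin (ar f) → A) (ω : X → A → L) : A → FTree σ ar X → L
  | a, .leaf x => ω x a
  | a, .node f ts => Finset.univ.inf fun i => phi op ω (op f a i) (ts i)

/-- Acceptance for an ordinary (crisp) DT recognizer: every leaf pair (x,b) of
the run from `a` satisfies b ∈ α x. -/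
def dAccepts (op : (f : σ) → A → Fin (ar f) → A) (α : X → Set A) :
    A → FTree σ ar X → Prop
  | a, .leaf x => a ∈ α x
  | a, .node f ts => ∀ i, dAccepts op α (op f a i) (ts i)

/-- A tree language is DT-recognizable if it is recognized by some finite
ordinary DT recognizer. -/
def DTRecLang {σ X : Type} {ar : σ → ℕ} (T : Set (FTree σ ar X)) : Prop :=
  ∃ (A : Type) (_ : Fintype A) (op : (f : σ) → A → Fin (ar f) → A)
    (a₀ : A) (α : X → Set A), T = {t | dAccepts op α a₀ t}

/-- An ℒ-fuzzy tree language is DT-recognizable if it is computed by some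
finite ℒ-DT recognizer. -/
def DTRecFuzzy {σ X : Type} {ar : σ → ℕ} (L : Type) [Lattice L] [BoundedOrder L]
    (Φ : FTree σ ar X → L) : Prop :=
  ∃ (A : Type) (_ : Fintype A) (op : (f : σ) → A → Fin (ar f) → A)
    (a₀ : A) (ω : X → A → L), ∀ t, Φ t = phi op ω a₀ t

/-- ΣX-contexts: trees with exactly one occurrence of the extra symbol ξ. -/
inductive Ctx (σ : Type) (ar : σ → ℕ) (X : Type) : Type where
  | hole : Ctx σ ar X
  | node : (f : σ) → (i : Fin (ar f)) → (Fin (ar f) → FTree σ ar X) →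
      Ctx σ ar X → Ctx σ ar X

/-- Substituting a tree for ξ in a context. -/
def Ctx.app : Ctx σ ar X → FTree σ ar X → FTree σ ar X
  | .hole, t => t
  | .node f i ts c, t => .node f (Function.update ts i (c.app t))

open Classical in
/-- The translation p(Φ): value Φ(s) on trees of the form p(s), and ⊥
elsewhere (the substitution t ↦ p(t) is injective, so s is unique). -/
noncomputable def ctxImage {L : Type} [Lattice L] [BoundedOrder L]
    (p : Ctx σ ar X) (Φ : FTree σ ar X → L) (t : FTree σ ar X) : L :=
  if h : ∃ s, p.app s = t then Φ h.choose else ⊥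

section aux
variable {L : Type} [Lattice L] [BoundedOrder L]

lemma inf_if_top {n : ℕ} (g : Fin n → L) (i : Fin n) :
    Finset.univ.inf g = (Finset.univ.inf fun j => if j = i then ⊤ else g j) ⊓ g i := by
  refine le_antisymm (le_inf (Finset.le_inf fun j _ => ?_) (Finset.inf_le (Finset.mem_univ i)))
    (Finset.le_inf fun j _ => ?_)
  · by_cases h : j = i
    · simp [h]
    · simp only [if_neg h]; exact Finset.inf_le (Finset.mem_univ j)
  · by_cases h : j = i
    · subst h; exact inf_le_right
    · exact inf_le_left.trans ((Finset.inf_le (Finset.mem_univ j)).trans (by simp [h]))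

lemma inf_meet {n : ℕ} (hn : 0 < n) (K : L) (g : Fin n → L) :
    (Finset.univ.inf fun i => K ⊓ g i) = K ⊓ Finset.univ.inf g :=
  le_antisymm (le_inf ((Finset.inf_le (Finset.mem_univ ⟨0, hn⟩)).trans inf_le_left)
      (Finset.le_inf fun i _ => (Finset.inf_le (Finset.mem_univ i)).trans inf_le_right))
    (Finset.le_inf fun i _ => le_inf inf_le_left (inf_le_right.trans (Finset.inf_le (Finset.mem_univ i))))

lemma phi_sink {Q : Type} (op : (f : σ) → Q → Fin (ar f) → Q) (ω : X → Q → L)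
    (har : ∀ f : σ, 1 ≤ ar f) (S : Q → Prop)
    (hop : ∀ f q i, S q → S (op f q i)) (hω : ∀ x q, S q → ω x q = ⊥) :
    ∀ (t : FTree σ ar X) q, S q → phi op ω q t = ⊥ := by
  intro t
  induction t with
  | leaf x => intro q hq; exact hω x q hq
  | node f ts ih =>
    intro q hq
    refine le_antisymm ?_ bot_le
    calc phi op ω q (.node f ts)
        ≤ phi op ω (op f q ⟨0, har f⟩) (ts ⟨0, har f⟩) := Finset.inf_le (Finset.mem_univ _)
      _ = ⊥ := ih _ _ (hop _ _ _ hq)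

lemma phi_sim {Q B : Type} (opQ : (f : σ) → Q → Fin (ar f) → Q) (ωQ : X → Q → L)
    (opB : (f : σ) → B → Fin (ar f) → B) (ωB : X → B → L) (h : B → Q)
    (hop : ∀ f b i, opQ f (h b) i = h (opB f b i)) (hω : ∀ x b, ωQ x (h b) = ωB x b) :
    ∀ (t : FTree σ ar X) b, phi opQ ωQ (h b) t = phi opB ωB b t := by
  intro t
  induction t with
  | leaf x => intro b; exact hω x b
  | node f ts ih =>
    intro b
    show (Finset.univ.inf fun i => phi opQ ωQ (opQ f (h b) i) (ts i)) = _
    exact Finset.inf_congr rfl fun i _ => by rw [hop]; exact ih i _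

end aux


section part1
variable {L : Type} [Lattice L] [BoundedOrder L]

def ctxRun (op : (f : σ) → A → Fin (ar f) → A) : Ctx σ ar X → A → A
  | .hole, a => a
  | .node f i _ c, a => ctxRun op c (op f a i)

noncomputable def ctxConst (op : (f : σ) → A → Fin (ar f) → A) (ω : X → A → L) :
    Ctx σ ar X → A → L
  | .hole, _ => ⊤
  | .node f i ts c, a =>
      (Finset.univ.inf fun j => if j = i then ⊤ else phi op ω (op f a j) (ts j)) ⊓
        ctxConst op ω c (op f a i)

lemma phi_ctx_app (op : (f : σ) → A → Fin (ar f) → A) (ω : X → A → L) :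
    ∀ (c : Ctx σ ar X) (a : A) (t : FTree σ ar X),
      phi op ω a (c.app t) = ctxConst op ω c a ⊓ phi op ω (ctxRun op c a) t := by
  intro c
  induction c with
  | hole => intro a t; simp [Ctx.app, ctxConst, ctxRun]
  | node f i ts c ih =>
    intro a t
    show (Finset.univ.inf fun j => phi op ω (op f a j) (Function.update ts i (c.app t) j))
        = _
    rw [inf_if_top _ i]
    have h1 : (Finset.univ.inf fun j =>
        if j = i then (⊤ : L) else phi op ω (op f a j) (Function.update ts i (c.app t) j))
        = Finset.univ.inf fun j => if j = i then ⊤ else phi op ω (op f a j) (ts j) := by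
      refine Finset.inf_congr rfl fun j _ => ?_
      by_cases h : j = i
      · simp [h]
      · simp [h, Function.update_of_ne h]
    rw [h1, Function.update_self, ih]
    simp [ctxConst, ctxRun, inf_assoc]

lemma phi_meet_const (har : ∀ f : σ, 1 ≤ ar f) (op : (f : σ) → A → Fin (ar f) → A)
    (ω : X → A → L) (K : L) :
    ∀ (t : FTree σ ar X) (a : A),
      phi op (fun x b => K ⊓ ω x b) a t = K ⊓ phi op ω a t := by
  intro t
  induction t with
  | leaf x => intro a; rfl
  | node f ts ih =>
    intro a
    show (Finset.univ.inf fun i => phi op (fun x b => K ⊓ ω x b) (op f a i) (ts i)) = _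
    rw [Finset.inf_congr rfl fun i _ => ih i _, inf_meet (har f)]
    rfl

lemma part1 (har : ∀ f : σ, 1 ≤ ar f) (Φ : FTree σ ar X → L) (hΦ : DTRecFuzzy L Φ)
    (p : Ctx σ ar X) : DTRecFuzzy L (fun t => Φ (p.app t)) := by
  obtain ⟨A, fin, op, a₀, ω, h⟩ := hΦ
  refine ⟨A, fin, op, ctxRun op p a₀, fun x b => ctxConst op ω p a₀ ⊓ ω x b, fun t => ?_⟩
  show Φ (p.app t) = _
  rw [phi_meet_const har, h, phi_ctx_app]

end part1

section part2
variable {L : Type} [Lattice L] [BoundedOrder L]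

open Classical in
lemma eqRec (har : ∀ f : σ, 1 ≤ ar f) (u : FTree σ ar X) :
    ∃ (A : Type) (_ : Fintype A) (op : (f : σ) → A → Fin (ar f) → A)
      (a₀ : A) (ω : X → A → L),
      ∀ t, phi op ω a₀ t = if t = u then ⊤ else ⊥ := by
  induction u with
  | leaf x₀ =>
    refine ⟨Bool, inferInstance, fun _ _ _ => false, true,
      fun x b => if b = true ∧ x = x₀ then ⊤ else ⊥, fun t => ?_⟩
    have hsink : ∀ (t : FTree σ ar X), phi (fun _ _ _ => false)
        (fun x b => if b = true ∧ x = x₀ then (⊤ : L) else ⊥) false t = ⊥ := by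
      intro t
      refine phi_sink _ _ har (fun b => b = false) (fun _ _ _ h => rfl) ?_ t false rfl
      intro x q hq; subst hq; simp
    cases t with
    | leaf x =>
      show (if true = true ∧ x = x₀ then (⊤:L) else ⊥) = _
      by_cases h : x = x₀ <;> simp [h, FTree.leaf.injEq]
    | node f ts =>
      have : phi (fun _ _ _ => false)
          (fun x b => if b = true ∧ x = x₀ then (⊤ : L) else ⊥) true (.node f ts) = ⊥ := by
        refine le_antisymm ?_ bot_le
        calc phi _ _ true (FTree.node f ts)
            ≤ phi _ _ false (ts ⟨0, har f⟩) := Finset.inf_le (Finset.mem_univ _)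
          _ = ⊥ := hsink _
      rw [this]
      simp
  | node f us ih =>
    choose Aj instj opj aj ωj hj using ih
    haveI : ∀ j, Fintype (Aj j) := instj
    let Q := Option (Option ((j : Fin (ar f)) × Aj j))
    let opQ : (f' : σ) → Q → Fin (ar f') → Q := fun f' q i' =>
      match q with
      | none => none
      | some none =>
          if h : f' = f then
            some (some ⟨Fin.cast (congrArg ar h) i', aj (Fin.cast (congrArg ar h) i')⟩)
          else none
      | some (some ⟨j, a⟩) => some (some ⟨j, opj j f' a i'⟩)
    let ωQ : X → Q → L := fun x q =>
      match q with
      | none => ⊥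
      | some none => ⊥
      | some (some ⟨j, a⟩) => ωj j x a
    have hsink : ∀ t, phi opQ ωQ none t = ⊥ := fun t =>
      phi_sink opQ ωQ har (fun q => q = none) (fun f q i hq => by subst hq; rfl)
        (fun x q hq => by subst hq; rfl) t none rfl
    have hsim : ∀ (j : Fin (ar f)) (a : Aj j) t,
        phi opQ ωQ (some (some ⟨j, a⟩)) t = phi (opj j) (ωj j) a t := by
      intro j a t
      exact phi_sim opQ ωQ (opj j) (ωj j) (fun a => some (some ⟨j, a⟩))
        (fun _ _ _ => rfl) (fun _ _ => rfl) t a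
    refine ⟨Q, inferInstance, opQ, some none, ωQ, fun t => ?_⟩
    cases t with
    | leaf x => simp [phi, ωQ]
    | node f' vs =>
      by_cases hf : f' = f
      · subst hf
        have hstep : ∀ i : Fin (ar f'), opQ f' (some none) i = some (some ⟨i, aj i⟩) := by
          intro i; show dite _ _ _ = _; rw [dif_pos rfl]; simp
        have hL : phi opQ ωQ (some none) (.node f' vs)
            = Finset.univ.inf fun i => if vs i = us i then (⊤:L) else ⊥ := by
          show (Finset.univ.inf fun i => phi opQ ωQ (opQ f' (some none) i) (vs i)) = _
          refine Finset.inf_congr rfl fun i _ => ?_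
          rw [hstep, hsim, hj]
        rw [hL]
        by_cases hv : vs = us
        · subst hv
          rw [if_pos rfl]
          exact le_antisymm le_top (Finset.le_inf fun i _ => by simp)
        · obtain ⟨i, hi⟩ := Function.ne_iff.mp hv
          rw [if_neg (by simp [FTree.node.injEq]; exact fun h => hv h)]
          refine le_antisymm ?_ bot_le
          calc Finset.univ.inf (fun i => if vs i = us i then (⊤:L) else ⊥)
              ≤ (if vs i = us i then (⊤:L) else ⊥) := Finset.inf_le (Finset.mem_univ i)
            _ = ⊥ := if_neg hi
      · have hL : phi opQ ωQ (some none) (.node f' vs) = ⊥ := by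
          refine le_antisymm ?_ bot_le
          have : opQ f' (some none) ⟨0, har f'⟩ = none := by
            show dite _ _ _ = _; rw [dif_neg hf]
          calc phi opQ ωQ (some none) (FTree.node f' vs)
              ≤ phi opQ ωQ (opQ f' (some none) ⟨0, har f'⟩) (vs ⟨0, har f'⟩) :=
                Finset.inf_le (Finset.mem_univ _)
            _ = ⊥ := by rw [this]; exact hsink _
        rw [hL, if_neg (by simp [FTree.node.injEq]; intro h; exact absurd h hf)]

lemma Ctx.app_injective (c : Ctx σ ar X) : Function.Injective c.app := by
  induction c with
  | hole => exact fun a b h => h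
  | node f i ts c ih =>
    intro s s' h
    have h2 : Function.update ts i (c.app s) = Function.update ts i (c.app s') := by
      have := (FTree.node.injEq _ _ _ _).mp h
      exact eq_of_heq this.2
    have h3 : c.app s = c.app s' := by
      have := congrFun h2 i
      simpa using this
    exact ih h3

lemma ctxImage_hole (Φ : FTree σ ar X → L) (t : FTree σ ar X) :
    ctxImage Ctx.hole Φ t = Φ t := by
  have hex : ∃ s, Ctx.hole.app s = t := ⟨t, rfl⟩
  simp only [ctxImage]
  rw [dif_pos hex]
  exact congrArg Φ hex.choose_spec

lemma ctxImage_app (p : Ctx σ ar X) (Φ : FTree σ ar X → L) (s : FTree σ ar X) :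
    ctxImage p Φ (p.app s) = Φ s := by
  have hex : ∃ s', p.app s' = p.app s := ⟨s, rfl⟩
  simp only [ctxImage]
  rw [dif_pos hex]
  exact congrArg Φ (p.app_injective hex.choose_spec)

lemma ctxImage_not (p : Ctx σ ar X) (Φ : FTree σ ar X → L) (t : FTree σ ar X)
    (h : ¬ ∃ s, p.app s = t) : ctxImage p Φ t = ⊥ := dif_neg h

open Classical in
lemma ctxImage_node (f : σ) (i : Fin (ar f)) (ts : Fin (ar f) → FTree σ ar X)
    (c : Ctx σ ar X) (Φ : FTree σ ar X → L) (vs : Fin (ar f) → FTree σ ar X) :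
    ctxImage (Ctx.node f i ts c) Φ (FTree.node f vs) =
      if ∀ j, j ≠ i → vs j = ts j then ctxImage c Φ (vs i) else ⊥ := by
  by_cases hex : ∃ s, (Ctx.node f i ts c).app s = FTree.node f vs
  · obtain ⟨s, hs⟩ := hex
    have hup : Function.update ts i (c.app s) = vs :=
      eq_of_heq ((FTree.node.injEq _ _ _ _).mp hs).2
    have hvsi : vs i = c.app s := by rw [← hup]; simp
    have hcond : ∀ j, j ≠ i → vs j = ts j := by
      intro j hj; rw [← hup, Function.update_of_ne hj]
    rw [if_pos hcond, ← hs, ctxImage_app, hvsi, ctxImage_app]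
  · rw [ctxImage_not _ _ _ hex]
    by_cases hcond : ∀ j, j ≠ i → vs j = ts j
    · rw [if_pos hcond]
      refine (ctxImage_not _ _ _ ?_).symm
      rintro ⟨s', hs'⟩
      refine hex ⟨s', ?_⟩
      show FTree.node f (Function.update ts i (c.app s')) = _
      congr 1
      funext j
      by_cases hj : j = i
      · subst hj; simp [hs']
      · rw [Function.update_of_ne hj, hcond j hj]
    · rw [if_neg hcond]

open Classical in
lemma part2 (har : ∀ f : σ, 1 ≤ ar f) :
    ∀ (p : Ctx σ ar X) (Φ : FTree σ ar X → L), DTRecFuzzy L Φ →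
      DTRecFuzzy L (ctxImage p Φ) := by
  intro p
  induction p with
  | hole =>
    intro Φ hΦ
    obtain ⟨A, fin, op, a₀, ω, h⟩ := hΦ
    exact ⟨A, fin, op, a₀, ω, fun t => by rw [ctxImage_hole]; exact h t⟩
  | node f i ts c ih =>
    intro Φ hΦ
    obtain ⟨B, finB, opB, b₀, ωB, hB⟩ := ih Φ hΦ
    choose Aj instj opj aj ωj hj using fun j => eqRec (L := L) har (ts j)
    haveI : ∀ j, Fintype (Aj j) := instj
    let Q := Option (Option (((j : Fin (ar f)) × Aj j) ⊕ B))
    let opQ : (f' : σ) → Q → Fin (ar f') → Q := fun f' q i' =>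
      match q with
      | none => none
      | some none =>
          if h : f' = f then
            if Fin.cast (congrArg ar h) i' = i then some (some (Sum.inr b₀))
            else some (some (Sum.inl ⟨Fin.cast (congrArg ar h) i',
              aj (Fin.cast (congrArg ar h) i')⟩))
          else none
      | some (some (Sum.inl ⟨j, a⟩)) => some (some (Sum.inl ⟨j, opj j f' a i'⟩))
      | some (some (Sum.inr b)) => some (some (Sum.inr (opB f' b i')))
    let ωQ : X → Q → L := fun x q =>
      match q with
      | none => ⊥
      | some none => ⊥
      | some (some (Sum.inl ⟨j, a⟩)) => ωj j x a
      | some (some (Sum.inr b)) => ωB x b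
    have hsink : ∀ t, phi opQ ωQ none t = ⊥ := fun t =>
      phi_sink opQ ωQ har (fun q => q = none) (fun f q i hq => by subst hq; rfl)
        (fun x q hq => by subst hq; rfl) t none rfl
    have hsimA : ∀ (j : Fin (ar f)) (a : Aj j) t,
        phi opQ ωQ (some (some (Sum.inl ⟨j, a⟩))) t = phi (opj j) (ωj j) a t := fun j a t =>
      phi_sim opQ ωQ (opj j) (ωj j) (fun a => some (some (Sum.inl ⟨j, a⟩)))
        (fun _ _ _ => rfl) (fun _ _ => rfl) t a
    have hsimB : ∀ (b : B) t,
        phi opQ ωQ (some (some (Sum.inr b))) t = phi opB ωB b t := fun b t =>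
      phi_sim opQ ωQ opB ωB (fun b => some (some (Sum.inr b)))
        (fun _ _ _ => rfl) (fun _ _ => rfl) t b
    refine ⟨Q, inferInstance, opQ, some none, ωQ, fun t => ?_⟩
    cases t with
    | leaf x =>
      rw [ctxImage_not]
      · rfl
      · rintro ⟨s, hs⟩; simp [Ctx.app] at hs
    | node f' vs =>
      by_cases hf : f' = f
      · subst hf
        rw [ctxImage_node]
        have hstep : ∀ i' : Fin (ar f'), opQ f' (some none) i' =
            if i' = i then some (some (Sum.inr b₀)) else some (some (Sum.inl ⟨i', aj i'⟩)) := by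
          intro i'; show dite _ _ _ = _; rw [dif_pos rfl]; simp
        have hL : phi opQ ωQ (some none) (.node f' vs)
            = Finset.univ.inf fun j =>
                if j = i then phi opB ωB b₀ (vs i)
                else if vs j = ts j then (⊤:L) else ⊥ := by
          show (Finset.univ.inf fun j => phi opQ ωQ (opQ f' (some none) j) (vs j)) = _
          refine Finset.inf_congr rfl fun j _ => ?_
          rw [hstep]
          by_cases hji : j = i
          · subst hji; rw [if_pos rfl, if_pos rfl, hsimB]
          · rw [if_neg hji, if_neg hji, hsimA, hj]
        rw [hL]
        by_cases hcond : ∀ j, j ≠ i → vs j = ts j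
        · rw [if_pos hcond, hB]
          refine le_antisymm (Finset.le_inf fun j _ => ?_)
            ((Finset.inf_le (Finset.mem_univ i)).trans_eq (if_pos rfl))
          by_cases hji : j = i
          · subst hji; rw [if_pos rfl]
          · rw [if_neg hji, if_pos (hcond j hji)]; exact le_top
        · rw [if_neg hcond]
          push_neg at hcond
          obtain ⟨j, hji, hne⟩ := hcond
          refine (le_antisymm ((Finset.inf_le (Finset.mem_univ j)).trans_eq ?_) bot_le).symm
          rw [if_neg hji, if_neg hne]
      · rw [ctxImage_not]
        · have hnone : opQ f' (some none) ⟨0, har f'⟩ = none := by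
            show dite _ _ _ = _; rw [dif_neg hf]
          refine (le_antisymm ?_ bot_le).symm
          calc phi opQ ωQ (some none) (FTree.node f' vs)
              ≤ phi opQ ωQ (opQ f' (some none) ⟨0, har f'⟩) (vs ⟨0, har f'⟩) :=
                Finset.inf_le (Finset.mem_univ _)
            _ = ⊥ := by rw [hnone]; exact hsink _
        · rintro ⟨s, hs⟩
          exact hf (((FTree.node.injEq _ _ _ _).mp hs).1).symm

end part2

/-- DT-recognizable ℒ-fuzzy tree languages are closed under
inverse context translations p⁻¹(Φ)(t) = Φ(p(t)) and under context
translations p(Φ). -/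
theorem dtrec_ctx_translations {L : Type} [Lattice L] [BoundedOrder L]
    (hnt : (⊥ : L) ≠ ⊤) (har : ∀ f : σ, 1 ≤ ar f)
    (Φ : FTree σ ar X → L) (hΦ : DTRecFuzzy L Φ) (p : Ctx σ ar X) :
    DTRecFuzzy L (fun t => Φ (p.app t)) ∧ DTRecFuzzy L (ctxImage p Φ) :=
  ⟨part1 har Φ hΦ p, part2 har p Φ hΦ⟩
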